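/- Let $x_c, x_{d^-}, x_{d^+}, x_{d^\star} \in \mathbb{R}^2$ be four points, and consider the two adjacent triangles $T$ with ordered vertices $(x_c, x_{d^-}, x_{d^+})$ and $T^+$ with ordered vertices $(x_c, x_{d^+}, x_{d^\star})$, with signed areas $A \ne 0$ and $A^+ \ne 0$ respectively. Denote by $N^T_v$ (resp. $N^{T^+}_v$) the corner vector of $T$ (resp. $T^+$) at vertex $v$. Then $\tfrac{1}{A}\, N^T_{d^+} \times N^T_c + \tfrac{1}{A^+}\, N^{T^+}_{d^+} \times N^{T^+}_c = 0$; that is, the contributions of the shared neighbor value to the discrete curl cancel between the two triangles sharing an edge. -/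

import Mathlib

/-- Counterclockwise rotation by 90 degrees in the plane. -/
def rot (a : ℝ × ℝ) : ℝ × ℝ := (-a.2, a.1)

/-- Planar cross product. -/
def cross (a b : ℝ × ℝ) : ℝ := a.1 * b.2 - a.2 * b.1

/-- The contributions of the shared neighbor value to the discrete curl cancel
between two triangles `T = (xc, xdm, xdp)` and `T⁺ = (xc, xdp, xds)` sharing the
edge `xc xdp`. Here `NT_dp`, `NT_c` are the corner vectors of `T` at vertices
`xdp`, `xc`, and `NTp_dp`, `NTp_c` those of `T⁺`. -/
theorem curl_contributions_cancel (xc xdm xdp xds : ℝ × ℝ)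
    (A Ap : ℝ)
    (hA : A = (1 / 2) * cross (xdm - xc) (xdp - xc)) (hA0 : A ≠ 0)
    (hAp : Ap = (1 / 2) * cross (xdp - xc) (xds - xc)) (hAp0 : Ap ≠ 0)
    (NT_c NT_dp NTp_c NTp_dp : ℝ × ℝ)
    (hNT_c : NT_c = (1 / 2 : ℝ) • rot (xdp - xdm))
    (hNT_dp : NT_dp = (1 / 2 : ℝ) • rot (xdm - xc))
    (hNTp_c : NTp_c = (1 / 2 : ℝ) • rot (xds - xdp))
    (hNTp_dp : NTp_dp = (1 / 2 : ℝ) • rot (xc - xds)) :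
    (1 / A) * cross NT_dp NT_c + (1 / Ap) * cross NTp_dp NTp_c = 0 := by
  have h1 : cross NT_dp NT_c = A / 2 := by
    subst hA hNT_c hNT_dp
    simp only [cross, rot, Prod.smul_mk, Prod.fst_sub, Prod.snd_sub, smul_eq_mul]
    ring
  have h2 : cross NTp_dp NTp_c = -(Ap / 2) := by
    subst hAp hNTp_c hNTp_dp
    simp only [cross, rot, Prod.smul_mk, Prod.fst_sub, Prod.snd_sub, smul_eq_mul]
    ring
  rw [h1, h2]
  field_simp
  ring
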